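/- For a continuous action of a finitely generated free group or monoid G on a compact metric space X, every internally block transitive closed set Y ⊆ X is invariant: f_i(y) ∈ Y for all y ∈ Y and generators i ∈ S. -/

import Mathlib

open TopologicalSpace

/-- Reduced words over the alphabet `S` of generators and inverses (`ι` = formal inverse). -/
def Reduced {S : Type*} (ι : S → S) (l : List S) : Prop :=
  l.Chain' (fun a b => b ≠ ι a)

/-- Left multiplication of a word by a letter, with cancellation. -/
def consRed {S : Type*} [DecidableEq S] (ι : S → S) (i : S) : List S → List S
  | [] => [i]
  | a :: t => if a = ι i then t else i :: a :: t

/-- Multiplication of reduced words: multiply the letters of `v` onto `u` from the right. -/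
def mulRed {S : Type*} [DecidableEq S] (ι : S → S) (v u : List S) : List S :=
  v.foldr (consRed ι) u

/-- The action of a word `l` on `x`: `f_{uv} = f_v ∘ f_u`. -/
def act {S X : Type*} (f : S → X → X) (l : List S) (x : X) : X :=
  l.foldl (fun y s => f s y) x

/-- A `δ`-`G`-pseudo-orbit: `𝒪 : G → X` (defined on reduced words) with
`d(f_i(𝒪(u)), 𝒪(u·i)) < δ` for every `u ∈ G` and generator `i`. -/
def IsPseudoOrbit {S X : Type*} [DecidableEq S] [MetricSpace X] (ι : S → S)
    (f : S → X → X) (δ : ℝ) (𝒪 : List S → X) : Prop :=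
  ∀ l : List S, Reduced ι l → ∀ i : S,
    dist (f i (𝒪 l)) (𝒪 (mulRed ι l [i])) < δ

/-- `Y` is internally block transitive: for every `δ > 0` and finitely many points of
`Y` there is a `δ`-`G`-pseudo-orbit taking values in `Y` whose image contains them. -/
def IBT {S X : Type*} [DecidableEq S] [MetricSpace X] (ι : S → S) (f : S → X → X)
    (Y : Set X) : Prop :=
  ∀ δ > (0 : ℝ), ∀ (n : ℕ) (p : Fin n → X), (∀ k, p k ∈ Y) →
    ∃ 𝒪 : List S → X, IsPseudoOrbit ι f δ 𝒪 ∧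
      (∀ l : List S, Reduced ι l → 𝒪 l ∈ Y) ∧
      (∀ k, ∃ l : List S, Reduced ι l ∧ 𝒪 l = p k)


lemma reduced_consRed {S : Type*} [DecidableEq S] (ι : S → S) (i : S) (l : List S)
    (h : Reduced ι l) : Reduced ι (consRed ι i l) := by
  cases l with
  | nil => exact List.isChain_singleton i
  | cons a t =>
    by_cases hc : a = ι i
    · simpa [consRed, hc] using (show Reduced ι t from (List.isChain_cons.mp h).2)
    · show Reduced ι (if a = ι i then t else i :: a :: t)
      rw [if_neg hc]
      exact List.isChain_cons_cons.mpr ⟨hc, h⟩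

lemma reduced_mulRed {S : Type*} [DecidableEq S] (ι : S → S) (v u : List S)
    (h : Reduced ι u) : Reduced ι (mulRed ι v u) := by
  induction v with
  | nil => exact h
  | cons a t ih => exact reduced_consRed ι a _ ih

/-- every internally block transitive closed subset is invariant. -/
theorem ibt_invariant {S X : Type*} [DecidableEq S] [Fintype S]
    [MetricSpace X] [CompactSpace X]
    (ι : S → S) (hι : ∀ s, ι (ι s) = s) (hιne : ∀ s, ι s ≠ s)
    (f : S → X → X) (hcont : ∀ s, Continuous (f s))
    (hinv : ∀ s y, f (ι s) (f s y) = y)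
    (Y : Set X) (hYclosed : IsClosed Y) (hY : IBT ι f Y) :
    ∀ y ∈ Y, ∀ i : S, f i y ∈ Y := by
  intro y hy i
  have : f i y ∈ closure Y := by
    rw [Metric.mem_closure_iff]
    intro ε hε
    obtain ⟨𝒪, hpo, hmem, hpt⟩ := hY ε hε 1 (fun _ => y) (fun _ => hy)
    obtain ⟨l, hl, hOl⟩ := hpt 0
    refine ⟨𝒪 (mulRed ι l [i]), hmem _ (reduced_mulRed ι l [i] (List.isChain_singleton _)), ?_⟩
    have := hpo l hl i
    rwa [hOl] at this
  rwa [hYclosed.closure_eq] at this
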